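/- In the gambler's coin game Markov chain on states {0, 1, ..., N, N+1} (N ≥ 2 even) where from each state 1 ≤ x ≤ N−1 the chain moves to x−1 with probability 3/4 and to x+2 with probability 1/4, and states 0, N, N+1 are absorbing, the probability of reaching {N, N+1} from any state x with 0 < x < N is strictly less than x/N; in particular the game starting at N/2 is unfair (winning probability < 1/2). -/

import Mathlib

/-- In the simplified coin-game Markov chain on {0,…,N+1} (N ≥ 2 even), moving from
    each 0 < x < N to x−1 with probability 3/4 and to x+2 with probability 1/4
    (0, N, N+1 absorbing), the probability h x of reaching {N, N+1}—the least
    nonnegative solution of the fixed-point equations—satisfies h x < x/N for all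
    0 < x < N; in particular the game starting at N/2 is unfair: h (N/2) < 1/2. -/
theorem stmt9 (N : ℕ) (hN : 2 ≤ N) (heven : Even N) (h : ℕ → ℝ)
    (hnonneg : ∀ x, 0 ≤ h x)
    (h0 : h 0 = 0) (hNv : h N = 1) (hN1 : h (N + 1) = 1)
    (hrec : ∀ x, 0 < x → x < N → h x = 3 / 4 * h (x - 1) + 1 / 4 * h (x + 2))
    (hleast : ∀ g : ℕ → ℝ, (∀ x, 0 ≤ g x) → g 0 = 0 → g N = 1 → g (N + 1) = 1 →
      (∀ x, 0 < x → x < N → g x = 3 / 4 * g (x - 1) + 1 / 4 * g (x + 2)) →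
      ∀ x, x ≤ N + 1 → h x ≤ g x) :
    (∀ x, 0 < x → x < N → h x < (x : ℝ) / N) ∧ h (N / 2) < 1 / 2 := by
  have hN0 : (0:ℝ) < N := by
    have : 0 < N := lt_of_lt_of_le (by norm_num) hN
    exact_mod_cast this
  set d : ℕ → ℝ := fun x => (x : ℝ) / N - h x with hd
  have d0 : d 0 = 0 := by simp [hd, h0]
  have dN : d N = 0 := by
    simp only [hd, hNv]
    field_simp
    norm_num
  have dN1 : (0:ℝ) ≤ d (N + 1) := by
    simp only [hd, hN1]
    rw [sub_nonneg, le_div_iff₀ hN0]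
    push_cast; linarith
  have drec : ∀ z, 0 < z → z < N →
      d z = 3 / 4 * d (z - 1) + 1 / 4 * d (z + 2) + 1 / (4 * N) := by
    intro z hz0 hzN
    have hc : ((z - 1 : ℕ) : ℝ) = (z : ℝ) - 1 := by
      have : 1 ≤ z := hz0
      push_cast [Nat.cast_sub this]; ring
    simp only [hd, hrec z hz0 hzN, hc]
    push_cast
    field_simp
    ring
  have key : ∀ x, 0 < x → x < N → 0 < d x := by
    by_contra hcon
    push_neg at hcon
    obtain ⟨x, hx0, hxN, hdx⟩ := hcon
    obtain ⟨y, hyS, hymin⟩ := (Finset.range (N + 2)).exists_min_image d ⟨0, by simp⟩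
    have hxS : x ∈ Finset.range (N + 2) := Finset.mem_range.mpr (by omega)
    -- obtain an interior minimizer z with d z ≤ 0
    obtain ⟨z, hz0, hzN, hdz, hmz⟩ :
        ∃ z, 0 < z ∧ z < N ∧ d z ≤ 0 ∧ ∀ w ∈ Finset.range (N + 2), d z ≤ d w := by
      by_cases hy : 0 < y ∧ y < N
      · exact ⟨y, hy.1, hy.2, le_trans (hymin x hxS) hdx, hymin⟩
      · -- y is a boundary state, so d y ≥ 0, hence d y = 0 = d x
        have hyb : y = 0 ∨ y = N ∨ y = N + 1 := by
          have := Finset.mem_range.mp hyS; omega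
        have hdy0 : 0 ≤ d y := by
          rcases hyb with rfl | rfl | rfl
          · exact le_of_eq d0.symm
          · exact le_of_eq dN.symm
          · exact dN1
        have hdx0 : d x = 0 := le_antisymm hdx (le_trans hdy0 (hymin x hxS))
        refine ⟨x, hx0, hxN, le_of_eq hdx0, fun w hw => ?_⟩
        calc d x = d y := by linarith [le_antisymm (hymin x hxS) (hdx0 ▸ hdy0)]
          _ ≤ d w := hymin w hw
    have h1 : d z ≤ d (z - 1) := hmz _ (Finset.mem_range.mpr (by omega))
    have h2 : d z ≤ d (z + 2) := hmz _ (Finset.mem_range.mpr (by omega))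
    have hpos : (0:ℝ) < 1 / (4 * N) := by positivity
    have heq := drec z hz0 hzN
    have hA := mul_le_mul_of_nonneg_left h1 (by norm_num : (0:ℝ) ≤ 3 / 4)
    have hB := mul_le_mul_of_nonneg_left h2 (by norm_num : (0:ℝ) ≤ 1 / 4)
    linarith [heq, hA, hB, hpos]
  have main : ∀ x, 0 < x → x < N → h x < (x : ℝ) / N := by
    intro x hx0 hxN
    have := key x hx0 hxN
    simp only [hd] at this
    linarith
  refine ⟨main, ?_⟩
  obtain ⟨k, hk⟩ := heven
  have hk1 : 1 ≤ k := by omega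
  have hhalf : N / 2 = k := by omega
  have := main (N / 2) (by omega) (by omega)
  have hcast : ((N / 2 : ℕ) : ℝ) / N = 1 / 2 := by
    rw [hhalf, hk]
    have hkR : (0:ℝ) < k := by exact_mod_cast hk1
    push_cast
    field_simp
    ring
  linarith [hcast ▸ this]
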